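/- Let A be a pointed regular category with kernels and cokernels. If C• is a chain complex in A all of whose differentials d^C_n are proper, then for every n the canonical arrow h^{FC}_n : Cok(d^C_{n+1}) → Ker(d^C_{n-1}) (the unique arrow with q^C_n·h^{FC}_n·k^C_{n-1} = d^C_n) is proper. -/

import Mathlib

open CategoryTheory CategoryTheory.Limits

noncomputable section

universe v u

variable {A : Type u} [Category.{v} A] [HasZeroMorphisms A] [HasKernels A] [HasCokernels A]

/-- The factorization `C_q ⟶ Ker(d r s)` of the differential `d q r`. -/
def kFac (C : ChainComplex A ℤ) (q r s : ℤ) : C.X q ⟶ kernel (C.d r s) :=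
  kernel.lift (C.d r s) (C.d q r) (C.d_comp_d q r s)

/-- The canonical arrow `h^{FC} : Cok(d p q) ⟶ Ker(d r s)` induced by the differential
`d q r` of the complex `C` (for a window `p, q, r, s` of indices): the unique arrow with
`q^C ≫ h^{FC} ≫ k^C = d q r`. -/
def hSeq (C : ChainComplex A ℤ) (p q r s : ℤ) : cokernel (C.d p q) ⟶ kernel (C.d r s) :=
  cokernel.desc (C.d p q) (kFac C q r s) (by
    rw [← cancel_mono (kernel.ι (C.d r s))]
    simp [kFac])

/-- The canonical connecting arrow `Cok(h^{FC}_{n+1}) ⟶ Ker(h^{FC}_n)` (for a window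
`p, q, r, s, t` of indices), the unique arrow `i` with
`cokernel.π ≫ i ≫ kernel.ι = kernel.ι ≫ cokernel.π`. -/
def iSeq (C : ChainComplex A ℤ) (p q r s t : ℤ) :
    cokernel (hSeq C p q r s) ⟶ kernel (hSeq C q r s t) :=
  kernel.lift (hSeq C q r s t)
    (cokernel.desc (hSeq C p q r s) (kernel.ι (C.d r s) ≫ cokernel.π (C.d q r))
      (by
        ext
        simp [hSeq, kFac]))
    (by
      rw [← cancel_mono (kernel.ι (C.d s t)), ← cancel_epi (cokernel.π (hSeq C p q r s))]
      simp only [Category.assoc]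
      rw [cokernel.π_desc_assoc (hSeq C p q r s), zero_comp, comp_zero]
      simp [hSeq, kFac])

/-- The arrow induced by a chain map on the cokernels of the differentials. -/
def cokMap {B C : ChainComplex A ℤ} (g : B ⟶ C) (p q : ℤ) :
    cokernel (B.d p q) ⟶ cokernel (C.d p q) :=
  cokernel.map (B.d p q) (C.d p q) (g.f p) (g.f q) (g.comm p q).symm

/-- The arrow induced by a chain map on the kernels of the differentials. -/
def kerMap {B C : ChainComplex A ℤ} (g : B ⟶ C) (r s : ℤ) :
    kernel (B.d r s) ⟶ kernel (C.d r s) :=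
  kernel.map (B.d r s) (C.d r s) (g.f r) (g.f s) (g.comm r s).symm

/-- The canonical factorization of an arrow through the kernel of its cokernel. -/
def properFact {X Y : A} (u : X ⟶ Y) : X ⟶ kernel (cokernel.π u) :=
  kernel.lift (cokernel.π u) u (cokernel.condition u)

/-- An arrow is proper if its canonical factorization through the kernel of its
cokernel is a regular epimorphism. -/
def IsProper {X Y : A} (u : X ⟶ Y) : Prop :=
  Nonempty (RegularEpi (properFact u))

/-- **Statement 13** (Lemma: the sequentiable family of a proper complex is proper).
Let `A` be a pointed regular category with kernels and cokernels.  If all the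
differentials of a chain complex `C` are proper, then so is every canonical arrow
`h^{FC}_n : Cok(d_{n+1}) ⟶ Ker(d_{n-1})`. -/
theorem hSeq_proper_of_proper_complex
    (A : Type u) [Category.{v} A] [HasZeroObject A] [HasZeroMorphisms A]
    [HasFiniteLimits A] [HasKernels A] [HasCokernels A]
    (hfact : ∀ {X Y : A} (f : X ⟶ Y), ∃ (I : A) (e : X ⟶ I) (m : I ⟶ Y),
        Nonempty (RegularEpi e) ∧ Mono m ∧ e ≫ m = f)
    (hstab : ∀ {P X Y Z : A} (fst : P ⟶ X) (snd : P ⟶ Y) (u : X ⟶ Z) (v : Y ⟶ Z),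
        IsPullback fst snd u v → Nonempty (RegularEpi v) → Nonempty (RegularEpi fst))
    (C : ChainComplex A ℤ)
    (hprop : ∀ i j : ℤ, j + 1 = i → IsProper (C.d i j)) :
    ∀ p q r s : ℤ, q + 1 = p → r + 1 = q → s + 1 = r → IsProper (hSeq C p q r s) := by
  intro p q r s hp hq hr
  obtain ⟨I, e, m, ⟨re⟩, mono_m, hem⟩ := hfact (hSeq C p q r s)
  obtain ⟨rd⟩ := hprop q r hq
  haveI := re
  haveI := rd
  haveI := mono_m
  -- notation
  set d : C.X q ⟶ C.X r := C.d q r with hd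
  set h : cokernel (C.d p q) ⟶ kernel (C.d r s) := hSeq C p q r s with hh
  set πq : C.X q ⟶ cokernel (C.d p q) := cokernel.π (C.d p q) with hπq
  set k : kernel (C.d r s) ⟶ C.X r := kernel.ι (C.d r s) with hk
  set w : C.X r ⟶ cokernel d := cokernel.π d with hw
  have hqhk : πq ≫ h ≫ k = d := by
    simp [hh, hπq, hk, hd, hSeq, kFac]
  -- the commutative square
  have hsq : (πq ≫ e) ≫ m ≫ k = properFact d ≫ kernel.ι w := by
    rw [properFact, kernel.lift_ι, Category.assoc, ← Category.assoc e, hem, hqhk]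
  -- strong epi on the left
  haveI : StrongEpi (properFact d) := by haveI := rd.effectiveEpi; infer_instance
  -- the lift t : kernel w ⟶ I
  have sq : CommSq (πq ≫ e) (properFact d) (m ≫ k) (kernel.ι w) := ⟨hsq⟩
  haveI : Mono (m ≫ k) := mono_comp _ _
  haveI := StrongEpi.llp (f := properFact d) (m ≫ k)
  set t : kernel w ⟶ I := sq.lift with hts
  have ht₂ : t ≫ m ≫ k = kernel.ι w := sq.fac_right
  -- k ≫ w factors through the cokernel of h
  have hkw : h ≫ k ≫ w = 0 := by
    have h0 : (πq ≫ h ≫ k) ≫ w = 0 := by rw [hqhk]; exact cokernel.condition d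
    rw [← cancel_epi πq, comp_zero]
    simpa using h0
  -- the canonical comparison m' : I ⟶ kernel (cokernel.π h)
  have hm0 : m ≫ cokernel.π h = 0 := by
    haveI := RegularEpi.epi _ re
    rw [← cancel_epi e, ← Category.assoc, hem, comp_zero]
    exact cokernel.condition h
  set m' : I ⟶ kernel (cokernel.π h) := kernel.lift (cokernel.π h) m hm0 with hm'
  have hm'ι : m' ≫ kernel.ι (cokernel.π h) = m := kernel.lift_ι _ _ _
  haveI : Mono m' := mono_of_mono_fac hm'ι
  -- build the inverse ψ
  have hκ0 : (kernel.ι (cokernel.π h) ≫ k) ≫ w = 0 := by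
    have hfw : k ≫ w = cokernel.π h ≫ cokernel.desc h (k ≫ w) hkw :=
      (cokernel.π_desc _ _ _).symm
    rw [Category.assoc, hfw, ← Category.assoc, kernel.condition, zero_comp]
  set θ : kernel (cokernel.π h) ⟶ kernel w :=
    kernel.lift w (kernel.ι (cokernel.π h) ≫ k) hκ0 with hθ
  set ψ : kernel (cokernel.π h) ⟶ I := θ ≫ t with hψ
  have hψm : ψ ≫ m = kernel.ι (cokernel.π h) := by
    rw [← cancel_mono k, Category.assoc, hψ, Category.assoc, ht₂, hθ, kernel.lift_ι]
  have hψm' : ψ ≫ m' = 𝟙 _ := by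
    rw [← cancel_mono (kernel.ι (cokernel.π h)), Category.assoc, hm'ι, hψm,
      Category.id_comp]
  have hm'ψ : m' ≫ ψ = 𝟙 _ := by
    rw [← cancel_mono m', Category.assoc, hψm', Category.comp_id, Category.id_comp]
  haveI : IsIso m' := ⟨ψ, hm'ψ, hψm'⟩
  -- the canonical factorization of h is e ≫ m'
  have hfc : properFact h = e ≫ m' := by
    rw [← cancel_mono (kernel.ι (cokernel.π h)), properFact, kernel.lift_ι,
      Category.assoc, hm'ι, hem]
  rw [IsProper, hfc]
  exact ⟨{ W := re.W
           left := re.left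
           right := re.right
           w := by rw [← Category.assoc, ← Category.assoc, re.w]
           isColimit := IsColimit.ofIsoColimit re.isColimit
             (Cofork.ext (asIso m') rfl) }⟩
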